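/- Let n be an odd prime and let p be any prime dividing B_n. Then p ≡ 1 (mod n) or p ≡ -1 (mod n), and moreover p ≥ 2n - 1. -/

import Mathlib

def B : ℕ → ℕ
  | 0 => 0
  | 1 => 1
  | (n + 2) => 6 * B (n + 1) - B n

lemma B_mono (m : ℕ) : B m ≤ B (m+1) := by
  induction m with
  | zero => simp [B]
  | succ m ih =>
      have h : B (m+1+1) = 6 * B (m+1) - B m := rfl
      omega

lemma B_rec (m : ℕ) : B (m+2) + B m = 6 * B (m+1) := by
  have h1 : B (m+2) = 6 * B (m+1) - B m := rfl
  have h2 := B_mono m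
  omega

lemma B_parity (m : ℕ) : B m % 2 = m % 2 ∧ B (m+1) % 2 = (m+1) % 2 := by
  induction m with
  | zero => simp [B]
  | succ m ih =>
      show B (m+1) % 2 = (m+1) % 2 ∧ B (m+2) % 2 = (m+2) % 2
      have := B_rec m
      omega

theorem stmt14 : ∀ n p : ℕ, n.Prime → Odd n → p.Prime → p ∣ B n →
    (p % n = 1 ∨ p % n = n - 1) ∧ 2 * n - 1 ≤ p := by
  intro n p hn hodd hp hdvd
  have hn2 : n % 2 = 1 := Nat.odd_iff.mp hodd
  have hn3 : 3 ≤ n := by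
    have h2 := hn.two_le
    omega
  have hBodd : B n % 2 = 1 := by
    have := (B_parity n).1; omega
  have hp2 : p ≠ 2 := by
    rintro rfl
    obtain ⟨k, hk⟩ := hdvd
    omega
  have hppos := hp.two_le
  have hpodd : p % 2 = 1 := Nat.odd_iff.mp (hp.odd_of_ne_two hp2)
  have main : n ∣ p - 1 ∨ n ∣ p + 1 := by
    haveI : Fact p.Prime := ⟨hp⟩
    set K := AlgebraicClosure (ZMod p) with hK
    haveI : CharP K p := charP_of_injective_algebraMap (algebraMap (ZMod p) K).injective p
    obtain ⟨s, hs⟩ := IsAlgClosed.exists_pow_nat_eq (2 : K) (n := 2) (by norm_num)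
    have h2K : (2 : K) ≠ 0 := by
      intro h
      have h' : ((2:ℕ):K) = 0 := by exact_mod_cast h
      have hd := (CharP.cast_eq_zero_iff K p 2).mp h'
      have := Nat.le_of_dvd (by norm_num) hd
      omega
    have hs0 : s ≠ 0 := by
      intro h
      rw [h] at hs
      simp at hs
      exact h2K hs.symm
    have hab : (3+2*s) * (3-2*s) = 1 := by linear_combination (-4)*hs
    have ha0 : (3+2*s:K) ≠ 0 := by
      intro h
      rw [h, zero_mul] at hab
      exact one_ne_zero hab.symm
    -- key identity
    have key : ∀ m : ℕ, ((B m : ℕ) : K) * (4*s) = (3+2*s)^m - (3-2*s)^m := by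
      have step : ∀ x : K, x^2 = 6*x - 1 → ∀ m:ℕ, x^(m+2) = 6*x^(m+1) - x^m := by
        intro x hx m
        calc x^(m+2) = x^m * x^2 := by ring
        _ = x^m * (6*x-1) := by rw [hx]
        _ = 6*x^(m+1) - x^m := by ring
      have ha2 : (3+2*s:K)^2 = 6*(3+2*s) - 1 := by linear_combination 4*hs
      have hb2 : (3-2*s:K)^2 = 6*(3-2*s) - 1 := by linear_combination 4*hs
      intro m
      induction m using Nat.twoStepInduction with
      | zero => simp [B]
      | one =>
          show ((B 1 : ℕ) : K) * (4*s) = _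
          simp only [B, Nat.cast_one, one_mul]
          ring
      | more m ih1 ih2 =>
          have hc : ((B (m+2) : ℕ) : K) + ((B m : ℕ) : K) = 6 * ((B (m+1) : ℕ) : K) := by
            have h := congrArg (Nat.cast : ℕ → K) (B_rec m); rw [Nat.cast_add, Nat.cast_mul, Nat.cast_ofNat] at h; exact h
          have haa := step _ ha2 m
          have hbb := step _ hb2 m
          linear_combination (4*s) * hc + 6*ih2 - ih1 - haa + hbb
    have hBn0 : ((B n : ℕ) : K) = 0 := (CharP.cast_eq_zero_iff K p (B n)).mpr hdvd
    have han : (3+2*s:K)^n = (3-2*s)^n := by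
      have h := key n
      rw [hBn0, zero_mul] at h
      exact sub_eq_zero.mp h.symm
    have h2n : (3+2*s:K)^(2*n) = 1 := by
      have h1 : (3+2*s:K)^n * (3-2*s)^n = 1 := by
        rw [← mul_pow, hab, one_pow]
      calc (3+2*s:K)^(2*n) = (3+2*s)^n * (3+2*s)^n := by rw [two_mul n, pow_add]
      _ = (3+2*s)^n * (3-2*s)^n := by rw [han]
      _ = 1 := h1
    -- Frobenius
    have hfix : ∀ c : ZMod p, ((algebraMap (ZMod p) K) c)^p = (algebraMap (ZMod p) K) c := by
      intro c
      rw [← map_pow, ZMod.pow_card]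
    have hfix3 : (3:K)^p = 3 := by
      have := hfix 3
      rw [map_ofNat] at this; exact this
    have hfix2 : (2:K)^p = 2 := by
      have := hfix 2
      rw [map_ofNat] at this; exact this
    have hfrob : (3+2*s:K)^p = 3 + 2*s^p := by
      rw [add_pow_char (3:K) (2*s) p, mul_pow, hfix3, hfix2]
    have hpodd' : p = 2*((p-1)/2) + 1 := by omega
    have hsp : s^p = (2:K)^((p-1)/2) * s := by
      calc s^p = s^(2*((p-1)/2)+1) := by rw [← hpodd']
      _ = (s^2)^((p-1)/2) * s := by rw [pow_succ, pow_mul]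
      _ = (2:K)^((p-1)/2) * s := by rw [hs]
    have h2p : (2:K)^(p-1) = 1 := by
      have h2z : ((2:ZMod p)) ≠ 0 := by
        intro h
        have h' : ((2:ℕ) : ZMod p) = 0 := by exact_mod_cast h
        have hd := (ZMod.natCast_eq_zero_iff 2 p).mp h'
        have := Nat.le_of_dvd (by norm_num) hd
        omega
      have := ZMod.pow_card_sub_one_eq_one h2z
      have h' := congrArg (algebraMap (ZMod p) K) this
      rw [map_pow, map_one] at h'
      rw [map_ofNat] at h'; exact h'
    have hepm : (2:K)^((p-1)/2) = 1 ∨ (2:K)^((p-1)/2) = -1 := by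
      apply mul_self_eq_one_iff.mp
      rw [← pow_add]
      have h' : (p-1)/2 + (p-1)/2 = p - 1 := by omega
      rw [h', h2p]
    set d := orderOf (3+2*s : K) with hd
    have hd2n : d ∣ 2*n := orderOf_dvd_of_pow_eq_one h2n
    have hdpm : d ∣ p - 1 ∨ d ∣ p + 1 := by
      rcases hepm with he | he
      · left
        have hap : (3+2*s:K)^p = 3+2*s := by rw [hfrob, hsp, he, one_mul]
        have hcan : (3+2*s:K)^(p-1) * (3+2*s) = 1 * (3+2*s) := by
          rw [one_mul, ← pow_succ]
          have h' : p - 1 + 1 = p := by omega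
          rw [h', hap]
        exact orderOf_dvd_of_pow_eq_one (mul_right_cancel₀ ha0 hcan)
      · right
        have hap : (3+2*s:K)^p = 3-2*s := by
          rw [hfrob, hsp, he]; ring
        have hone : (3+2*s:K)^(p+1) = 1 := by
          rw [pow_succ, hap]
          linear_combination (-4)*hs
        exact orderOf_dvd_of_pow_eq_one hone
    have hd1 : d ≠ 1 := by
      intro h
      have h1 : (3+2*s:K) = 1 := orderOf_eq_one_iff.mp h
      have h4 : (4:K) = 0 := by linear_combination (-2+2*s)*h1 - 4*hs
      have h4' : ((4:ℕ):K) = 0 := by exact_mod_cast h4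
      have hdvd4 := (CharP.cast_eq_zero_iff K p 4).mp h4'
      have hdvd2 : p ∣ 2 := by
        apply hp.dvd_of_dvd_pow (n := 2)
        norm_num
        exact hdvd4
      have := Nat.le_of_dvd (by norm_num) hdvd2
      omega
    have hd2 : d ≠ 2 := by
      intro h
      have h2 : (3+2*s:K)^2 = 1 := by have := pow_orderOf_eq_one (3+2*s:K); rwa [show orderOf (3+2*s:K) = 2 from h] at this
      have h32 : (32:K) = 0 := by linear_combination (12*s-16)*h2 - (48*s+80)*hs
      have h32' : ((32:ℕ):K) = 0 := by exact_mod_cast h32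
      have hdvd32 := (CharP.cast_eq_zero_iff K p 32).mp h32'
      have hdvd2 : p ∣ 2 := by
        apply hp.dvd_of_dvd_pow (n := 5)
        norm_num
        exact hdvd32
      have := Nat.le_of_dvd (by norm_num) hdvd2
      omega
    have hnd : n ∣ d := by
      by_contra h
      have hc : Nat.Coprime d n := Nat.coprime_comm.mp ((hn.coprime_iff_not_dvd).mpr h)
      have hdd : d ∣ 2 := hc.dvd_of_dvd_mul_right hd2n
      rcases (Nat.dvd_prime Nat.prime_two).mp hdd with h' | h' <;> tauto
    rcases hdpm with h | h
    · exact Or.inl (hnd.trans h)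
    · exact Or.inr (hnd.trans h)
  rcases main with h | h
  · obtain ⟨k, hk⟩ := h
    have hk0 : k ≠ 0 := by rintro rfl; omega
    have hk1 : k ≠ 1 := by rintro rfl; omega
    have hk2 : 2 ≤ k := by omega
    have hge : n*2 ≤ n*k := Nat.mul_le_mul_left n hk2
    have hpe : p = n*k + 1 := by omega
    constructor
    · left
      rw [hpe, Nat.mul_add_mod]
      exact Nat.mod_eq_of_lt (by omega)
    · omega
  · obtain ⟨k, hk⟩ := h
    have hk0 : k ≠ 0 := by rintro rfl; omega
    have hk1 : k ≠ 1 := by rintro rfl; omega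
    have hkk : n*k = n*(k-1) + n := by
      have h1 : k - 1 + 1 = k := by omega
      calc n*k = n*((k-1)+1) := by rw [h1]
      _ = n*(k-1) + n := by rw [Nat.mul_succ]
    have hge : n*1 ≤ n*(k-1) := Nat.mul_le_mul_left n (by omega)
    have hpe : p = n*(k-1) + (n-1) := by omega
    constructor
    · right
      rw [hpe, Nat.mul_add_mod]
      exact Nat.mod_eq_of_lt (by omega)
    · omega
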